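/- arXiv:1204.0691 — 3 statements merged into one kernel-verified Lean document; each statement's English description precedes it below -/
import Mathlib

section
/- If u is a positive harmonic function on the unit disk D, then for any two points z, z₀ ∈ D one has exp(−ρ(z,z₀)) ≤ u(z)/u(z₀) ≤ exp(ρ(z,z₀)), where ρ is the Poincaré distance ρ(z,z₀) = log((1+t)/(1−t)) with t = |z−z₀|/|1−conj(z₀)·z|. -/
open Complex Metric

private lemma one_sub_ne_zero_of_norm_lt_one' {x : ℂ} (hx : ‖x‖ < 1) : (1 : ℂ) - x ≠ 0 := by
  intro h
  have h1 : (1 : ℂ) = x := sub_eq_zero.mp h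
  rw [← h1] at hx
  simp at hx

private lemma normSq_lt_normSq_norm {x y : ℂ} (h : Complex.normSq x < Complex.normSq y) :
    ‖x‖ < ‖y‖ := by
  have := Real.sqrt_lt_sqrt (Complex.normSq_nonneg _) h
  rwa [← Complex.norm_def, ← Complex.norm_def] at this

private lemma mobius_norm_lt_one {a b : ℂ} (ha : ‖a‖ < 1) (hb : ‖b‖ < 1) :
    ‖(a - b) / (1 - (starRingEnd ℂ) b * a)‖ < 1 := by
  have hd : (1 : ℂ) - (starRingEnd ℂ) b * a ≠ 0 := by
    apply one_sub_ne_zero_of_norm_lt_one'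
    rw [norm_mul, RCLike.norm_conj]
    nlinarith [norm_nonneg a, norm_nonneg b]
  rw [norm_div, div_lt_one (norm_pos_iff.mpr hd)]
  apply normSq_lt_normSq_norm
  have ha2 : Complex.normSq a < 1 := by
    have : ‖a‖ ^ 2 < 1 ^ 2 := by nlinarith [norm_nonneg a]
    simpa [Complex.sq_norm] using this
  have hb2 : Complex.normSq b < 1 := by
    have : ‖b‖ ^ 2 < 1 ^ 2 := by nlinarith [norm_nonneg b]
    simpa [Complex.sq_norm] using this
  have key : Complex.normSq (1 - (starRingEnd ℂ) b * a) - Complex.normSq (a - b)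
      = (1 - Complex.normSq a) * (1 - Complex.normSq b) := by
    simp [Complex.normSq_apply, Complex.mul_re, Complex.mul_im, Complex.sub_re, Complex.sub_im,
      Complex.one_re, Complex.one_im, Complex.conj_re, Complex.conj_im]
    ring
  nlinarith

private lemma halfplane_norm_lt {A c : ℂ} (hA : 0 < A.re) (hc : 0 < c.re) :
    ‖A - c‖ < ‖A + (starRingEnd ℂ) c‖ := by
  apply normSq_lt_normSq_norm
  have key : Complex.normSq (A + (starRingEnd ℂ) c) - Complex.normSq (A - c)
      = 4 * A.re * c.re := by
    simp [Complex.normSq_apply, Complex.add_re, Complex.add_im, Complex.sub_re, Complex.sub_im,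
      Complex.conj_re, Complex.conj_im]
    ring
  nlinarith

/-- Invariant Harnack inequalities on the unit disk:
`exp(-ρ(z,z₀)) ≤ u z / u z₀ ≤ exp(ρ(z,z₀))` where `ρ` is the Poincaré distance
of curvature `-1`. -/
theorem harnack_inequality_invariant (u : ℂ → ℝ) (F : ℂ → ℂ)
    (hF : DifferentiableOn ℂ F (ball 0 1))
    (huF : ∀ z ∈ ball (0 : ℂ) 1, u z = (F z).re)
    (hpos : ∀ z ∈ ball (0 : ℂ) 1, 0 < u z) :
    ∀ z ∈ ball (0 : ℂ) 1, ∀ z₀ ∈ ball (0 : ℂ) 1,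
      Real.exp (-(Real.log ((1 + ‖(z - z₀) / (1 - (starRingEnd ℂ) z₀ * z)‖) /
          (1 - ‖(z - z₀) / (1 - (starRingEnd ℂ) z₀ * z)‖)))) ≤ u z / u z₀ ∧
      u z / u z₀ ≤
        Real.exp (Real.log ((1 + ‖(z - z₀) / (1 - (starRingEnd ℂ) z₀ * z)‖) /
          (1 - ‖(z - z₀) / (1 - (starRingEnd ℂ) z₀ * z)‖))) := by
  intro z hzB z₀ hz₀B
  have hz : ‖z‖ < 1 := mem_ball_zero_iff.mp hzB
  have hz₀ : ‖z₀‖ < 1 := mem_ball_zero_iff.mp hz₀B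
  -- real parts of F are positive on the ball
  have hre : ∀ w ∈ ball (0 : ℂ) 1, 0 < (F w).re := fun w hw => (huF w hw) ▸ hpos w hw
  set c : ℂ := F z₀ with hc_def
  have hb : 0 < c.re := hre z₀ hz₀B
  -- the Möbius map sending 0 to z₀
  set m : ℂ → ℂ := fun w => (w + z₀) / (1 + (starRingEnd ℂ) z₀ * w) with hm_def
  have hden : ∀ w ∈ ball (0 : ℂ) 1, (1 : ℂ) + (starRingEnd ℂ) z₀ * w ≠ 0 := by
    intro w hw
    have hw' : ‖w‖ < 1 := mem_ball_zero_iff.mp hw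
    have : (1 : ℂ) - (-((starRingEnd ℂ) z₀ * w)) ≠ 0 := by
      apply one_sub_ne_zero_of_norm_lt_one'
      rw [norm_neg, norm_mul, RCLike.norm_conj]
      nlinarith [norm_nonneg w, norm_nonneg z₀]
    simpa [sub_neg_eq_add] using this
  have hmaps : Set.MapsTo m (ball (0 : ℂ) 1) (ball (0 : ℂ) 1) := by
    intro w hw
    have hw' : ‖w‖ < 1 := mem_ball_zero_iff.mp hw
    have := mobius_norm_lt_one (a := w) (b := -z₀) hw' (by simpa using hz₀)
    simp only [map_neg, sub_neg_eq_add, neg_mul] at this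
    exact mem_ball_zero_iff.mpr (by simpa [hm_def] using this)
  -- denominators of the Cayley transform are nonzero
  have hden2 : ∀ A : ℂ, 0 < A.re → A + (starRingEnd ℂ) c ≠ 0 := by
    intro A hA h
    have := congrArg Complex.re h
    simp [Complex.add_re, Complex.conj_re] at this
    linarith
  -- the composed map
  set H : ℂ → ℂ := fun w => (F (m w) - c) / (F (m w) + (starRingEnd ℂ) c) with hH_def
  have hm_diff : DifferentiableOn ℂ m (ball (0 : ℂ) 1) := by
    apply DifferentiableOn.div
    · exact (differentiable_id.add_const z₀).differentiableOn
    · exact ((differentiable_const _).add ((differentiable_const _).mul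
        differentiable_id)).differentiableOn
    · exact hden
  have hFm : DifferentiableOn ℂ (fun w => F (m w)) (ball (0 : ℂ) 1) :=
    hF.comp hm_diff hmaps
  have hH_diff : DifferentiableOn ℂ H (ball (0 : ℂ) 1) := by
    apply DifferentiableOn.div
    · exact hFm.sub (differentiableOn_const _)
    · exact hFm.add (differentiableOn_const _)
    · exact fun w hw => hden2 _ (hre _ (hmaps hw))
  have hH_maps : Set.MapsTo H (ball (0 : ℂ) 1) (ball (0 : ℂ) 1) := by
    intro w hw
    have hA : 0 < (F (m w)).re := hre _ (hmaps hw)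
    refine mem_ball_zero_iff.mpr ?_
    rw [hH_def]
    simp only
    rw [norm_div, div_lt_one (norm_pos_iff.mpr (hden2 _ hA))]
    exact halfplane_norm_lt hA hb
  have hm0 : m 0 = z₀ := by simp [hm_def]
  have hH0 : H 0 = 0 := by simp [hH_def, hm0, hc_def]
  -- apply Schwarz at the point ω
  set ω : ℂ := (z - z₀) / (1 - (starRingEnd ℂ) z₀ * z) with hω_def
  set t : ℝ := ‖ω‖ with ht_def
  have ht1 : t < 1 := mobius_norm_lt_one hz hz₀
  have ht0 : 0 ≤ t := norm_nonneg _
  have hωB : ω ∈ ball (0 : ℂ) 1 := mem_ball_zero_iff.mpr ht1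
  have hSch : ‖H ω‖ ≤ ‖ω‖ :=
    Complex.norm_le_norm_of_mapsTo_ball hH_diff (hH_maps.mono_right ball_subset_closedBall) hH0
      ht1
  -- m ω = z
  have h1 : (1 : ℂ) - (starRingEnd ℂ) z₀ * z ≠ 0 := by
    apply one_sub_ne_zero_of_norm_lt_one'
    rw [norm_mul, RCLike.norm_conj]
    nlinarith [norm_nonneg z, norm_nonneg z₀]
  have hωmul : ω * (1 - (starRingEnd ℂ) z₀ * z) = z - z₀ := div_mul_cancel₀ _ h1
  have hmω : m ω = z := by
    rw [hm_def]
    simp only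
    rw [div_eq_iff (hden ω hωB)]
    linear_combination hωmul
  -- the key norm inequality
  have hkey : ‖F z - c‖ ≤ t * ‖F z + (starRingEnd ℂ) c‖ := by
    have hA : 0 < (F z).re := hre z hzB
    have h2 : ‖(F z - c) / (F z + (starRingEnd ℂ) c)‖ ≤ t := by
      have : H ω = (F z - c) / (F z + (starRingEnd ℂ) c) := by rw [hH_def]; simp only [hmω]
      rw [← this]; exact hSch
    rw [norm_div] at h2
    have hd0 : 0 < ‖F z + (starRingEnd ℂ) c‖ :=
      norm_pos_iff.mpr (hden2 _ hA)
    rw [div_le_iff₀ hd0] at h2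
    simpa using h2
  -- pass to real parts
  set a : ℝ := (F z).re with ha_def
  have ha : 0 < a := hre z hzB
  set b : ℝ := c.re with hb_def
  have hsq : Complex.normSq (F z - c) ≤ t ^ 2 * Complex.normSq (F z + (starRingEnd ℂ) c) := by
    have h3 : ‖F z - c‖ ^ 2 ≤ (t * ‖F z + (starRingEnd ℂ) c‖) ^ 2 := by
      apply pow_le_pow_left₀ (norm_nonneg _) hkey
    rw [mul_pow] at h3
    simpa [Complex.sq_norm] using h3
  have hcoord1 : Complex.normSq (F z - c) = (a - b) ^ 2 + ((F z).im - c.im) ^ 2 := by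
    simp [Complex.normSq_apply, Complex.sub_re, Complex.sub_im, ha_def, hb_def]
    ring
  have hcoord2 : Complex.normSq (F z + (starRingEnd ℂ) c)
      = (a + b) ^ 2 + ((F z).im - c.im) ^ 2 := by
    simp [Complex.normSq_apply, Complex.add_re, Complex.add_im, Complex.conj_re,
      Complex.conj_im, ha_def, hb_def]
    ring
  rw [hcoord1, hcoord2] at hsq
  set y : ℝ := (F z).im - c.im
  have hy : 0 ≤ (1 - t ^ 2) * y ^ 2 :=
    mul_nonneg (by nlinarith) (sq_nonneg y)
  have h4 : (a - b) ^ 2 ≤ (t * (a + b)) ^ 2 := by nlinarith [hsq, hy]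
  have h4' : (b - a) ^ 2 ≤ (t * (a + b)) ^ 2 := by nlinarith [hsq, hy]
  have hts : 0 ≤ t * (a + b) := mul_nonneg ht0 (by linarith)
  have habs1 : a - b ≤ t * (a + b) := le_of_pow_le_pow_left₀ two_ne_zero hts h4
  have habs2 : b - a ≤ t * (a + b) := le_of_pow_le_pow_left₀ two_ne_zero hts h4'
  have hx : (0 : ℝ) < (1 + t) / (1 - t) := by
    apply div_pos <;> linarith
  have huz : u z = a := huF z hzB
  have huz₀ : u z₀ = b := huF z₀ hz₀B
  rw [huz, huz₀]
  constructor
  · rw [Real.exp_neg, Real.exp_log hx, inv_div, div_le_div_iff₀ (by linarith) hb]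
    linarith [habs2]
  · rw [Real.exp_log hx, div_le_div_iff₀ hb (by linarith)]
    linarith [habs1]
end

section
/- Let f be holomorphic on the unit disk D with 0 < |f(z)| < M for all z ∈ D. Then for every z ∈ D, |f(z)| ≤ |f(0)|^α · M^(1−α), where α = (1−|z|)/(1+|z|). -/
open Complex Metric
open scoped NNReal ENNReal

/-- Every holomorphic function on the open unit disk has a primitive there. -/
lemma exists_primitive_ball {h : ℂ → ℂ} (hd : DifferentiableOn ℂ h (ball 0 1)) :
    ∃ g : ℂ → ℂ, ∀ z ∈ ball (0 : ℂ) 1, HasDerivAt g (h z) z := by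
  have hball : ∀ {r : ℝ≥0}, (r : ℝ) < 1 → DifferentiableOn ℂ h (closedBall 0 (r : ℝ)) :=
    fun {r} hr => hd.mono (closedBall_subset_ball hr)
  set p : FormalMultilinearSeries ℂ ℂ ℂ := cauchyPowerSeries h 0 ((1/2 : ℝ≥0) : ℝ) with hp_def
  have hp : HasFPowerSeriesOnBall h p 0 (1/2 : ℝ≥0) :=
    (hball (by norm_num)).hasFPowerSeriesOnBall (by norm_num)
  refine ⟨fun w => ∑' n : ℕ, (p.coeff n / (n + 1)) * w ^ (n + 1), ?_⟩
  intro z hz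
  rw [mem_ball_zero_iff] at hz
  set t : ℝ := (1 + ‖z‖) / 2 with ht_def
  have hz0 : 0 ≤ ‖z‖ := norm_nonneg z
  have ht1 : t < 1 := by rw [ht_def]; linarith
  have hzt : ‖z‖ < t := by rw [ht_def]; linarith
  have ht0 : (0:ℝ) < t := by positivity
  set t' : ℝ≥0 := ⟨(1 + t) / 2, by positivity⟩ with ht'_def
  have ht'c : (t' : ℝ) = (1 + t) / 2 := rfl
  have ht'1 : (t' : ℝ) < 1 := by rw [ht'c]; linarith
  have htt' : t < t' := by rw [ht'c]; linarith
  have hq : HasFPowerSeriesOnBall h (cauchyPowerSeries h 0 (t' : ℝ)) 0 t' :=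
    (hball ht'1).hasFPowerSeriesOnBall (by simp [← NNReal.coe_lt_coe, ht'c]; positivity)
  have hpq : p = cauchyPowerSeries h 0 (t' : ℝ) :=
    hp.hasFPowerSeriesAt.eq_formalMultilinearSeries hq.hasFPowerSeriesAt
  rw [← hpq] at hq
  -- summability of the coefficient bound
  have hrad : ((t.toNNReal : ℝ≥0) : ℝ≥0∞) < p.radius := by
    refine lt_of_lt_of_le ?_ hq.r_le
    rw [ENNReal.coe_lt_coe, ← NNReal.coe_lt_coe, Real.coe_toNNReal _ ht0.le]
    exact htt'
  have hsum : Summable fun n : ℕ => ‖p n‖ * t ^ n := by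
    have := p.summable_norm_mul_pow hrad
    simpa [Real.coe_toNNReal _ ht0.le] using this
  have hsum' : Summable fun n : ℕ => ‖p.coeff n‖ * t ^ n := by
    refine Summable.of_nonneg_of_le (fun n => by positivity) (fun n => ?_) hsum
    have : ‖p.coeff n‖ ≤ ‖p n‖ := by
      simpa using (p n).le_opNorm (fun _ => (1:ℂ))
    exact mul_le_mul_of_nonneg_right this (by positivity)
  -- apply term-by-term differentiation
  have key : HasDerivAt (fun w => ∑' n : ℕ, (p.coeff n / (n + 1)) * w ^ (n + 1))
      (∑' n : ℕ, p.coeff n * z ^ n) z := by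
    refine hasDerivAt_tsum_of_isPreconnected hsum' isOpen_ball
      (convex_ball (0:ℂ) t).isPreconnected
      (g' := fun n y => p.coeff n * y ^ n) (y₀ := 0) ?_ ?_ ?_ ?_ ?_
    · intro n y _
      have := (hasDerivAt_pow (n+1) y).const_mul (p.coeff n / (n + 1))
      refine this.congr_deriv ?_
      have hn : ((n:ℂ) + 1) ≠ 0 := Nat.cast_add_one_ne_zero n
      rw [Nat.add_sub_cancel]
      push_cast
      linear_combination (p.coeff n * y ^ n) * mul_inv_cancel₀ hn
    · intro n y hy
      rw [mem_ball_zero_iff] at hy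
      rw [norm_mul, norm_pow]
      exact mul_le_mul_of_nonneg_left
        (pow_le_pow_left₀ (norm_nonneg _) hy.le n) (norm_nonneg _)
    · exact mem_ball_self ht0
    · simpa using summable_zero
    · exact mem_ball_zero_iff.mpr hzt
  convert key using 1
  have hmem : z ∈ Metric.eball (0:ℂ) (t' : ℝ≥0∞) := by
    rw [Metric.eball_coe, mem_ball_zero_iff]
    exact hzt.trans htt'
  have hsz := hq.hasSum_sub hmem
  simp only [sub_zero, FormalMultilinearSeries.apply_eq_pow_smul_coeff, smul_eq_mul] at hsz
  rw [← hsz.tsum_eq]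
  exact tsum_congr fun n => (mul_comm _ _)

/-- A nonvanishing holomorphic function on the unit disk has a holomorphic logarithm. -/
lemma exists_log_ball {f : ℂ → ℂ} (hf : DifferentiableOn ℂ f (ball 0 1))
    (hne : ∀ z ∈ ball (0 : ℂ) 1, f z ≠ 0) :
    ∃ L : ℂ → ℂ, (∀ z ∈ ball (0 : ℂ) 1, DifferentiableAt ℂ L z) ∧
      ∀ z ∈ ball (0 : ℂ) 1, Complex.exp (L z) = f z := by
  have hh : DifferentiableOn ℂ (fun z => deriv f z / f z) (ball 0 1) := by
    have : AnalyticOnNhd ℂ (deriv f) (ball 0 1) :=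
      (hf.analyticOnNhd isOpen_ball).deriv
    exact this.differentiableOn.div hf hne
  obtain ⟨g, hg⟩ := exists_primitive_ball hh
  have hF : ∀ z ∈ ball (0 : ℂ) 1,
      HasDerivAt (fun w => f w * Complex.exp (-g w)) 0 z := by
    intro z hz
    have hfz : HasDerivAt f (deriv f z) z :=
      (hf.differentiableAt (isOpen_ball.mem_nhds hz)).hasDerivAt
    have hgz : HasDerivAt (fun w => Complex.exp (-g w))
        (Complex.exp (-g z) * -(deriv f z / f z)) z := ((hg z hz).neg).cexp
    have := hfz.mul hgz
    refine this.congr_deriv ?_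
    have h0 := hne z hz
    linear_combination (-(cexp (-g z) * deriv f z)) * mul_inv_cancel₀ h0
  have hconst : ∀ z ∈ ball (0 : ℂ) 1,
      f z * Complex.exp (-g z) = f 0 * Complex.exp (-g 0) := by
    intro z hz
    have h0 : (0 : ℂ) ∈ ball (0 : ℂ) 1 := mem_ball_self one_pos
    refine (convex_ball (0:ℂ) 1).is_const_of_fderivWithin_eq_zero (𝕜 := ℂ)
      (f := fun w => f w * Complex.exp (-g w)) ?_ ?_ hz h0
    · intro w hw
      exact (hF w hw).differentiableAt.differentiableWithinAt
    · intro w hw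
      rw [fderivWithin_of_isOpen isOpen_ball hw, (hF w hw).hasFDerivAt.fderiv]
      ext v
      simp
  refine ⟨fun z => Complex.log (f 0) + (g z - g 0), ?_, ?_⟩
  · intro z hz
    exact (differentiableAt_const _).add
      (((hg z hz).differentiableAt).sub (differentiableAt_const _))
  · intro z hz
    have h0 : f 0 ≠ 0 := hne 0 (mem_ball_self one_pos)
    have key := hconst z hz
    rw [Complex.exp_neg, Complex.exp_neg] at key
    rw [Complex.exp_add, Complex.exp_log h0, Complex.exp_sub]
    have e0 := Complex.exp_ne_zero (g 0)
    have ez := Complex.exp_ne_zero (g z)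
    field_simp at key ⊢
    linear_combination -key

lemma harnack_algebra {a b p q r : ℝ} (hr0 : 0 ≤ r) (hr1 : r < 1) (ha : a < 0) (hp : p < 0)
    (hsq : (a - p)^2 + (b - q)^2 ≤ r^2 * ((a + p)^2 + (b - q)^2)) :
    a * (1 + r) ≤ p * (1 - r) := by
  have h3 : (a-p)^2 ≤ (r*(a+p))^2 := by
    have hr2 : 0 ≤ 1 - r^2 := by nlinarith
    nlinarith [mul_nonneg hr2 (sq_nonneg (b-q))]
  have hnn : 0 ≤ -(r*(a+p)) := by
    have : a + p ≤ 0 := by linarith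
    nlinarith [mul_nonneg hr0 (neg_nonneg.mpr this)]
  have h4 : a - p ≤ -(r*(a+p)) := by
    nlinarith [h3, hnn, sq_nonneg (a - p + r*(a+p))]
  linarith

/-- Pointwise two-constants theorem: if `f` is holomorphic on the unit disk with
`0 < |f| < M`, then `|f z| ≤ |f 0| ^ α * M ^ (1 - α)` with `α = (1-|z|)/(1+|z|)`. -/
theorem two_constants_pointwise (f : ℂ → ℂ) (M : ℝ) (hM : 0 < M)
    (hf : DifferentiableOn ℂ f (ball 0 1))
    (hbd : ∀ z ∈ ball (0 : ℂ) 1, 0 < ‖f z‖ ∧ ‖f z‖ < M) :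
    ∀ z ∈ ball (0 : ℂ) 1,
      ‖f z‖ ≤ ‖f 0‖ ^ ((1 - ‖z‖) / (1 + ‖z‖)) * M ^ (1 - (1 - ‖z‖) / (1 + ‖z‖)) := by
  intro z hz
  have h0mem : (0:ℂ) ∈ ball (0:ℂ) 1 := mem_ball_self one_pos
  have hne : ∀ w ∈ ball (0:ℂ) 1, f w ≠ 0 := fun w hw => norm_pos_iff.mp (hbd w hw).1
  obtain ⟨L, hLdiff, hLexp⟩ := exists_log_ball hf hne
  -- the real part of `L` is the log of the modulus
  have hre : ∀ w ∈ ball (0:ℂ) 1, (L w).re = Real.log ‖f w‖ := by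
    intro w hw
    have : ‖f w‖ = Real.exp ((L w).re) := by
      rw [← hLexp w hw, Complex.norm_exp]
    rw [this, Real.log_exp]
  set φ : ℂ → ℂ := fun w => L w - (Real.log M : ℂ) with hφ_def
  have hφre : ∀ w ∈ ball (0:ℂ) 1, (φ w).re = Real.log ‖f w‖ - Real.log M := by
    intro w hw
    simp [hφ_def, Complex.sub_re, hre w hw]
  have hφneg : ∀ w ∈ ball (0:ℂ) 1, (φ w).re < 0 := by
    intro w hw
    rw [hφre w hw, sub_neg]
    exact Real.log_lt_log (hbd w hw).1 (hbd w hw).2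
  set c : ℂ := φ 0 with hc_def
  have hcneg : c.re < 0 := hφneg 0 h0mem
  -- the Möbius transform to the unit disk
  have hlt : ∀ w : ℂ, w.re < 0 → ‖w - c‖ < ‖w + (starRingEnd ℂ) c‖ := by
    intro w hw
    have h1 : ‖w - c‖^2 < ‖w + (starRingEnd ℂ) c‖^2 := by
      rw [Complex.sq_norm, Complex.sq_norm,
        Complex.normSq_apply, Complex.normSq_apply]
      simp only [Complex.sub_re, Complex.sub_im, Complex.add_re, Complex.add_im,
        Complex.conj_re, Complex.conj_im]
      nlinarith [mul_pos (neg_pos.mpr hw) (neg_pos.mpr hcneg)]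
    exact lt_of_pow_lt_pow_left₀ 2 (norm_nonneg _) h1
  have hden : ∀ w ∈ ball (0:ℂ) 1, φ w + (starRingEnd ℂ) c ≠ 0 := by
    intro w hw hzero
    have : (φ w + (starRingEnd ℂ) c).re = (φ w).re + c.re := by
      simp [Complex.add_re, Complex.conj_re]
    rw [hzero] at this
    simp only [Complex.zero_re] at this
    have := hφneg w hw
    linarith [hφneg w hw, hcneg, this]
  set G : ℂ → ℂ := fun w => (φ w - c) / (φ w + (starRingEnd ℂ) c) with hG_def
  have hGdiff : DifferentiableOn ℂ G (ball 0 1) := by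
    intro w hw
    have hφd : DifferentiableAt ℂ φ w := (hLdiff w hw).sub (differentiableAt_const _)
    exact (((hφd.sub (differentiableAt_const _)).div
      (hφd.add (differentiableAt_const _)) (hden w hw))).differentiableWithinAt
  have hGmaps : Set.MapsTo G (ball (0:ℂ) 1) (ball (0:ℂ) 1) := by
    intro w hw
    rw [mem_ball_zero_iff, hG_def]
    rw [norm_div]
    have h1 := hlt (φ w) (hφneg w hw)
    have h2 : (0:ℝ) < ‖φ w + (starRingEnd ℂ) c‖ := (norm_nonneg _).lt_of_ne'
      (by simpa [norm_ne_zero_iff] using hden w hw)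
    rw [div_lt_one h2]
    exact h1
  have hG0 : G 0 = 0 := by
    simp [hG_def, hc_def]
  -- Schwarz lemma
  have hz' : ‖z‖ < 1 := by
    rw [← mem_ball_zero_iff]; exact hz
  have hSchwarz := Complex.norm_le_norm_of_mapsTo_ball hGdiff
    (hGmaps.mono_right ball_subset_closedBall) hG0 hz'
  have hS : ‖φ z - c‖ ≤ ‖z‖ * ‖φ z + (starRingEnd ℂ) c‖ := by
    have h2 : (0:ℝ) < ‖φ z + (starRingEnd ℂ) c‖ := (norm_nonneg _).lt_of_ne'
      (by simpa [norm_ne_zero_iff] using hden z hz)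
    have : ‖G z‖ ≤ ‖z‖ := by
      simpa using hSchwarz
    rw [hG_def] at this
    rw [norm_div, div_le_iff₀ h2] at this
    linarith [this]
  -- extract the Harnack-type inequality on real parts
  set r : ℝ := ‖z‖ with hr_def
  set a : ℝ := (φ z).re with ha_def
  set b : ℝ := (φ z).im with hb_def
  set p : ℝ := c.re with hp_def
  set q : ℝ := c.im with hq_def
  have hr0 : 0 ≤ r := norm_nonneg z
  have hr1 : r < 1 := by rw [hr_def, ← mem_ball_zero_iff]; exact hz
  have hA2 : ‖φ z - c‖^2 = (a-p)^2 + (b-q)^2 := by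
    rw [Complex.sq_norm, Complex.normSq_apply]
    simp only [Complex.sub_re, Complex.sub_im]
    ring
  have hB2 : ‖φ z + (starRingEnd ℂ) c‖^2 = (a+p)^2 + (b-q)^2 := by
    rw [Complex.sq_norm, Complex.normSq_apply]
    simp only [Complex.add_re, Complex.add_im, Complex.conj_re, Complex.conj_im]
    ring
  have hsq : (a-p)^2 + (b-q)^2 ≤ r^2 * ((a+p)^2 + (b-q)^2) := by
    have := mul_self_le_mul_self (norm_nonneg (φ z - c)) hS
    nlinarith [hA2, hB2, norm_nonneg (φ z - c), norm_nonneg (φ z + (starRingEnd ℂ) c)]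
  have haneg : a < 0 := hφneg z hz
  have hpneg : p < 0 := hcneg
  have hkey : a * (1 + r) ≤ p * (1 - r) :=
    harnack_algebra hr0 hr1 haneg hpneg hsq
  -- translate back to logarithms
  have hf0 : 0 < ‖f 0‖ := (hbd 0 h0mem).1
  have hfz : 0 < ‖f z‖ := (hbd z hz).1
  set α : ℝ := (1 - r) / (1 + r) with hα_def
  have h1r : (0:ℝ) < 1 + r := by linarith
  have hαp : a ≤ α * p := by
    show a ≤ (1 - r) / (1 + r) * p
    have h5 : a ≤ p * (1 - r) / (1 + r) := by
      rw [le_div_iff₀ h1r]; linarith [hkey]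
    calc a ≤ p * (1 - r) / (1 + r) := h5
      _ = (1 - r) / (1 + r) * p := by ring
  have hloga : a = Real.log ‖f z‖ - Real.log M := by
    rw [ha_def]; exact hφre z hz
  have hlogp : p = Real.log ‖f 0‖ - Real.log M := by
    rw [hp_def, hc_def]; exact hφre 0 h0mem
  have hlog : Real.log ‖f z‖ ≤ α * Real.log ‖f 0‖ + (1 - α) * Real.log M := by
    rw [hloga, hlogp] at hαp
    linarith [hαp]
  calc ‖f z‖ = Real.exp (Real.log ‖f z‖) := (Real.exp_log hfz).symm
    _ ≤ Real.exp (α * Real.log ‖f 0‖ + (1 - α) * Real.log M) := Real.exp_le_exp.mpr hlog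
    _ = ‖f 0‖ ^ α * M ^ (1 - α) := by
        rw [Real.exp_add, Real.rpow_def_of_pos hf0, Real.rpow_def_of_pos hM,
          mul_comm α, mul_comm (1 - α)]
end

section
/- Schwarz–Pick for the punctured disk: if f is holomorphic on the unit disk D with values in D∖{0}, then for every z ∈ D, exp(−ρ_D(z,0)) ≤ log(1/|f(z)|)/log(1/|f(0)|) ≤ exp(ρ_D(z,0)), i.e., ((1−|z|)/(1+|z|)) ≤ log(1/|f(z)|)/log(1/|f(0)|) ≤ ((1+|z|)/(1−|z|)). -/
open Complex Metric Set MeasureTheory intervalIntegral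

/-- Existence of a primitive of a holomorphic function on the unit ball. -/
lemma sppd_exists_primitive {h : ℂ → ℂ} (hd : DifferentiableOn ℂ h (ball 0 1)) :
    ∃ g : ℂ → ℂ, g 0 = 0 ∧ ∀ z ∈ ball (0:ℂ) 1, HasDerivAt g (h z) z := by
  have hA : AnalyticOnNhd ℂ h (ball 0 1) := hd.analyticOnNhd isOpen_ball
  have hd' : DifferentiableOn ℂ (deriv h) (ball 0 1) := (hA.deriv).differentiableOn
  have hc : ContinuousOn h (ball 0 1) := hd.continuousOn
  have hc' : ContinuousOn (deriv h) (ball 0 1) := hd'.continuousOn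
  refine ⟨fun z => ∫ t in (0:ℝ)..1, z * h ((t:ℂ) * z), by simp, ?_⟩
  intro z₀ hz₀'
  have hz₀ : ‖z₀‖ < 1 := mem_ball_zero_iff.mp hz₀'
  set ε : ℝ := (1 - ‖z₀‖) / 2 with hε
  have hε0 : 0 < ε := by rw [hε]; linarith
  set r : ℝ := ‖z₀‖ + ε with hrdef
  have hr1 : r < 1 := by rw [hrdef, hε]; linarith
  have hr0 : 0 ≤ r := by rw [hrdef]; positivity
  have hmem : ∀ (t : ℝ), t ∈ Set.Icc (0:ℝ) 1 → ∀ x ∈ ball z₀ ε,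
      (t:ℂ) * x ∈ closedBall (0:ℂ) r := by
    intro t ht x hx
    rw [mem_closedBall_zero_iff]
    have h2 : ‖x - z₀‖ < ε := by rw [← dist_eq_norm]; exact mem_ball.mp hx
    have hxr : ‖x‖ ≤ r := by
      have h3 := norm_sub_norm_le x z₀
      rw [hrdef]; linarith
    calc ‖(t:ℂ) * x‖ = |t| * ‖x‖ := by simp [norm_mul]
      _ ≤ 1 * r := mul_le_mul (abs_le.mpr ⟨by linarith [ht.1], ht.2⟩) hxr (norm_nonneg x) zero_le_one
      _ = r := one_mul r
  have hsub : closedBall (0:ℂ) r ⊆ ball 0 1 := closedBall_subset_ball hr1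
  obtain ⟨C₁, hC₁⟩ : ∃ C, ∀ w ∈ closedBall (0:ℂ) r, ‖h w‖ ≤ C :=
    (isCompact_closedBall 0 r).exists_bound_of_continuousOn (hc.mono hsub)
  obtain ⟨C₂, hC₂⟩ : ∃ C, ∀ w ∈ closedBall (0:ℂ) r, ‖deriv h w‖ ≤ C :=
    (isCompact_closedBall 0 r).exists_bound_of_continuousOn (hc'.mono hsub)
  have hcont : ∀ x ∈ ball z₀ ε, ContinuousOn (fun t : ℝ => x * h ((t:ℂ) * x)) (Set.Icc 0 1) := by
    intro x hx
    refine continuousOn_const.mul (hc.comp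
      ((Complex.continuous_ofReal.mul continuous_const).continuousOn) ?_)
    intro t ht; exact hsub (hmem t ht x hx)
  have hcont' : ContinuousOn
      (fun t : ℝ => h ((t:ℂ) * z₀) + z₀ * (deriv h ((t:ℂ) * z₀) * (t:ℂ))) (Set.Icc 0 1) := by
    have hmt : ∀ t ∈ Set.Icc (0:ℝ) 1, (t:ℂ) * z₀ ∈ ball (0:ℂ) 1 :=
      fun t ht => hsub (hmem t ht z₀ (mem_ball_self hε0))
    have hcm : ContinuousOn (fun t : ℝ => (t:ℂ) * z₀) (Set.Icc 0 1) :=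
      (Complex.continuous_ofReal.mul continuous_const).continuousOn
    exact (hc.comp hcm hmt).add (continuousOn_const.mul
      ((hc'.comp hcm hmt).mul Complex.continuous_ofReal.continuousOn))
  have hIoc : Set.uIoc (0:ℝ) 1 ⊆ Set.Icc 0 1 := by
    rw [Set.uIoc_of_le zero_le_one]; exact Set.Ioc_subset_Icc_self
  have key := intervalIntegral.hasDerivAt_integral_of_dominated_loc_of_deriv_le
    (F := fun x t => x * h ((t:ℂ) * x))
    (F' := fun x t => h ((t:ℂ) * x) + x * (deriv h ((t:ℂ) * x) * (t:ℂ)))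
    (x₀ := z₀) (a := 0) (b := 1) (μ := MeasureTheory.volume)
    (bound := fun _ => C₁ + (‖z₀‖ + ε) * (C₂ * 1)) (Metric.ball_mem_nhds z₀ hε0) ?_ ?_ ?_ ?_ ?_ ?_
  · -- conclude: the integral of F' z₀ equals h z₀
    have h2 := key.2
    have heq : (∫ t in (0:ℝ)..1, (h ((t:ℂ) * z₀) + z₀ * (deriv h ((t:ℂ) * z₀) * (t:ℂ)))) = h z₀ := by
      have : ∀ t ∈ Set.uIcc (0:ℝ) 1, HasDerivAt (fun s : ℝ => (s:ℂ) * h ((s:ℂ) * z₀))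
          (h ((t:ℂ) * z₀) + z₀ * (deriv h ((t:ℂ) * z₀) * (t:ℂ))) t := by
        intro t ht
        rw [Set.uIcc_of_le zero_le_one] at ht
        have hmem' : (t:ℂ) * z₀ ∈ ball (0:ℂ) 1 := hsub (hmem t ht z₀ (mem_ball_self hε0))
        have hdh : HasDerivAt h (deriv h ((t:ℂ) * z₀)) ((t:ℂ) * z₀) :=
          (hd.differentiableAt (isOpen_ball.mem_nhds hmem')).hasDerivAt
        have hlin : HasDerivAt (fun s : ℝ => (s:ℂ) * z₀) z₀ t := by
          simpa using (Complex.ofRealCLM.hasDerivAt (x := t)).mul_const z₀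
        have hofr : HasDerivAt (fun s : ℝ => (s:ℂ)) 1 t := by
          exact Complex.ofRealCLM.hasDerivAt (x := t)
        have hcomp : HasDerivAt (fun s : ℝ => h ((s:ℂ) * z₀)) (z₀ • deriv h ((t:ℂ) * z₀)) t :=
          HasDerivAt.scomp t hdh hlin
        have := hofr.mul hcomp
        refine this.congr_deriv ?_
        simp only [smul_eq_mul]; ring
      rw [intervalIntegral.integral_eq_sub_of_hasDerivAt this
        (hcont'.intervalIntegrable_of_Icc zero_le_one)]
      simp
    rw [heq] at h2
    exact h2
  · -- hF_meas
    filter_upwards [Metric.ball_mem_nhds z₀ hε0] with x hx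
    exact ((hcont x hx).mono hIoc).aestronglyMeasurable measurableSet_uIoc
  · -- hF_int
    exact (hcont z₀ (mem_ball_self hε0)).intervalIntegrable_of_Icc zero_le_one
  · -- hF'_meas
    exact (hcont'.mono hIoc).aestronglyMeasurable measurableSet_uIoc
  · -- h_bound
    refine Filter.Eventually.of_forall (fun t ht x hx => ?_)
    have htI : t ∈ Set.Icc (0:ℝ) 1 := hIoc ht
    have hm := hmem t htI x hx
    have hxn : ‖x‖ ≤ ‖z₀‖ + ε := by
      have h2 : ‖x - z₀‖ < ε := by rw [← dist_eq_norm]; exact mem_ball.mp hx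
      have h3 := norm_sub_norm_le x z₀; linarith
    have htn : ‖(t:ℂ)‖ ≤ 1 := by
      simp only [Complex.norm_real, Real.norm_eq_abs]
      exact abs_le.mpr ⟨by linarith [htI.1], htI.2⟩
    calc ‖h ((t:ℂ) * x) + x * (deriv h ((t:ℂ) * x) * (t:ℂ))‖
        ≤ ‖h ((t:ℂ) * x)‖ + ‖x * (deriv h ((t:ℂ) * x) * (t:ℂ))‖ := norm_add_le _ _
      _ ≤ C₁ + (‖z₀‖ + ε) * (C₂ * 1) := by
          gcongr
          · exact hC₁ _ hm
          · rw [norm_mul, norm_mul]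
            have hC₂0 : 0 ≤ C₂ := le_trans (norm_nonneg _) (hC₂ _ hm)
            exact mul_le_mul hxn (mul_le_mul (hC₂ _ hm) htn (norm_nonneg _) hC₂0)
              (by positivity) (by positivity)
  · -- bound integrable
    exact intervalIntegrable_const
  · -- h_diff
    refine Filter.Eventually.of_forall (fun t ht x hx => ?_)
    have htI : t ∈ Set.Icc (0:ℝ) 1 := hIoc ht
    have hmem' : (t:ℂ) * x ∈ ball (0:ℂ) 1 := hsub (hmem t htI x hx)
    have hdh : HasDerivAt h (deriv h ((t:ℂ) * x)) ((t:ℂ) * x) :=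
      (hd.differentiableAt (isOpen_ball.mem_nhds hmem')).hasDerivAt
    have hcomp : HasDerivAt (fun y : ℂ => h ((t:ℂ) * y)) ((t:ℂ) * deriv h ((t:ℂ) * x)) x := by
      have hlin : HasDerivAt (fun y : ℂ => (t:ℂ) * y) (t:ℂ) x := by
        simpa using (hasDerivAt_id x).const_mul (t:ℂ)
      exact (HasDerivAt.scomp x hdh hlin).congr_deriv (smul_eq_mul _ _)
    have h2 := (hasDerivAt_id x).mul hcomp
    exact h2.congr_deriv (by simp only [id_eq, one_mul]; ring)

lemma sppd_key (c t w : ℂ) (h : w * (1 - t) = c + t * (starRingEnd ℂ) c) :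
    w.re * Complex.normSq (1 - t) = c.re * (1 - Complex.normSq t) := by
  have h1 := congrArg Complex.re h
  have h2 := congrArg Complex.im h
  simp only [Complex.mul_re, Complex.mul_im, Complex.add_re, Complex.add_im, Complex.sub_re,
    Complex.sub_im, Complex.one_re, Complex.one_im, Complex.conj_re, Complex.conj_im] at h1 h2
  simp only [Complex.normSq_apply, Complex.sub_re, Complex.sub_im, Complex.one_re, Complex.one_im]
  linear_combination (1 - t.re) * h1 - t.im * h2

set_option maxHeartbeats 1000000 in
/-- Schwarz–Pick for the punctured disk: if `f : 𝔻 → 𝔻 ∖ {0}` is holomorphic then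
`(1-|z|)/(1+|z|) ≤ log(1/|f z|)/log(1/|f 0|) ≤ (1+|z|)/(1-|z|)`. -/
theorem schwarz_pick_punctured_disk (f : ℂ → ℂ)
    (hf : DifferentiableOn ℂ f (ball 0 1))
    (hbd : ∀ z ∈ ball (0 : ℂ) 1, 0 < ‖f z‖ ∧ ‖f z‖ < 1) :
    ∀ z ∈ ball (0 : ℂ) 1,
      (1 - ‖z‖) / (1 + ‖z‖) ≤ Real.log (1 / ‖f z‖) / Real.log (1 / ‖f 0‖) ∧
      Real.log (1 / ‖f z‖) / Real.log (1 / ‖f 0‖) ≤ (1 + ‖z‖) / (1 - ‖z‖) := by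
  have h0 : (0:ℂ) ∈ ball (0:ℂ) 1 := mem_ball_self one_pos
  have hne : ∀ z ∈ ball (0:ℂ) 1, f z ≠ 0 := fun z hz => norm_pos_iff.mp (hbd z hz).1
  have hdf : DifferentiableOn ℂ (deriv f) (ball 0 1) :=
    ((hf.analyticOnNhd isOpen_ball).deriv).differentiableOn
  have hdiv : DifferentiableOn ℂ (fun z => deriv f z / f z) (ball 0 1) := hdf.div hf hne
  obtain ⟨g, hg0, hg⟩ := sppd_exists_primitive hdiv
  set G : ℂ → ℂ := fun z => Complex.log (f 0) + g z with hGdef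
  have hGd : ∀ z ∈ ball (0:ℂ) 1, HasDerivAt G (deriv f z / f z) z :=
    fun z hz => (hg z hz).const_add _
  -- `f = exp ∘ G`
  have hq : ∀ z ∈ ball (0:ℂ) 1, HasDerivAt (fun w => f w * Complex.exp (-G w)) 0 z := by
    intro z hz
    have hfz : HasDerivAt f (deriv f z) z :=
      (hf.differentiableAt (isOpen_ball.mem_nhds hz)).hasDerivAt
    have hE : HasDerivAt (fun w => Complex.exp (-G w))
        (Complex.exp (-G z) * -(deriv f z / f z)) z := ((hGd z hz).neg).cexp
    have h2 := hfz.mul hE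
    refine h2.congr_deriv ?_
    have hfz' : f z * (deriv f z / f z) = deriv f z := mul_div_cancel₀ _ (hne z hz)
    linear_combination (-Complex.exp (-G z)) * hfz'
  have hconst : ∀ z ∈ ball (0:ℂ) 1, f z * Complex.exp (-G z) = f 0 * Complex.exp (-G 0) := by
    intro z hz
    refine Convex.is_const_of_fderivWithin_eq_zero (convex_ball 0 1)
      (fun w hw => ((hq w hw).differentiableAt.differentiableWithinAt))
      (fun w hw => ?_) hz h0
    rw [fderivWithin_of_isOpen isOpen_ball hw, (hq w hw).hasFDerivAt.fderiv]
    ext1; simp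
  have hG00 : G 0 = Complex.log (f 0) := by simp [hGdef, hg0]
  have hfG : ∀ z ∈ ball (0:ℂ) 1, f z = Complex.exp (G z) := by
    intro z hz
    have hq0 : f 0 * Complex.exp (-G 0) = 1 := by
      rw [hG00, Complex.exp_neg, Complex.exp_log (hne 0 h0), mul_inv_cancel₀ (hne 0 h0)]
    have h1 := hconst z hz
    rw [hq0, Complex.exp_neg] at h1
    field_simp at h1
    exact h1
  have hre : ∀ z ∈ ball (0:ℂ) 1, (G z).re = Real.log ‖f z‖ := by
    intro z hz
    rw [hfG z hz, Complex.norm_exp, Real.log_exp]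
  have hGre : ∀ z ∈ ball (0:ℂ) 1, (G z).re < 0 := by
    intro z hz
    rw [hre z hz]
    exact Real.log_neg (hbd z hz).1 (hbd z hz).2
  set c : ℂ := G 0 with hcdef
  have hc_re : c.re < 0 := hGre 0 h0
  have hden : ∀ z ∈ ball (0:ℂ) 1, G z + (starRingEnd ℂ) c ≠ 0 := by
    intro z hz h
    have h2 : (G z + (starRingEnd ℂ) c).re = 0 := by rw [h]; simp
    rw [Complex.add_re, Complex.conj_re] at h2
    linarith [hGre z hz]
  set F : ℂ → ℂ := fun z => (G z - c) / (G z + (starRingEnd ℂ) c) with hFdef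
  have hGdiff : DifferentiableOn ℂ G (ball 0 1) :=
    fun z hz => ((hGd z hz).differentiableAt).differentiableWithinAt
  have hFdiff : DifferentiableOn ℂ F (ball 0 1) :=
    (hGdiff.sub (differentiableOn_const c)).div
      (hGdiff.add (differentiableOn_const _)) hden
  have hmaps : Set.MapsTo F (ball 0 1) (ball 0 1) := by
    intro z hz
    show F z ∈ ball 0 1
    rw [mem_ball_zero_iff, hFdef]
    have hd0 : 0 < ‖G z + (starRingEnd ℂ) c‖ :=
      norm_pos_iff.mpr (hden z hz)
    rw [norm_div, div_lt_one hd0]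
    have hsq : Complex.normSq (G z - c) < Complex.normSq (G z + (starRingEnd ℂ) c) := by
      simp only [Complex.normSq_apply, Complex.sub_re, Complex.sub_im, Complex.add_re,
        Complex.add_im, Complex.conj_re, Complex.conj_im]
      nlinarith [hGre z hz, hc_re]
    rw [← Complex.sq_norm, ← Complex.sq_norm] at hsq
    exact lt_of_pow_lt_pow_left₀ 2 (norm_nonneg _) hsq
  have hF0 : F 0 = 0 := by simp [hFdef, ← hcdef]
  have hschwarz : ∀ z ∈ ball (0:ℂ) 1, ‖F z‖ ≤ ‖z‖ := fun z hz =>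
    Complex.norm_le_norm_of_mapsTo_ball hFdiff (hmaps.mono_right ball_subset_closedBall) hF0
      (mem_ball_zero_iff.mp hz)
  -- final algebra
  intro z hz
  have hz1 : ‖z‖ < 1 := mem_ball_zero_iff.mp hz
  set t : ℂ := F z with htdef
  set s : ℝ := ‖t‖ with hsdef
  have hs_le : s ≤ ‖z‖ := by
    have h2 := hschwarz z hz
    exact h2
  have hs0 : 0 ≤ s := norm_nonneg t
  have hs1 : s < 1 := lt_of_le_of_lt hs_le hz1
  have hts : t * (G z + (starRingEnd ℂ) c) = G z - c :=
    div_mul_cancel₀ _ (hden z hz)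
  have hw : G z * (1 - t) = c + t * (starRingEnd ℂ) c := by linear_combination -hts
  have hkey := sppd_key c t (G z) hw
  set u : ℝ := -(G z).re with hudef
  set u0 : ℝ := -c.re with hu0def
  have hu0 : 0 < u0 := by rw [hu0def]; linarith
  have hu : 0 < u := by rw [hudef]; linarith [hGre z hz]
  set N : ℝ := Complex.normSq (1 - t) with hNdef
  have hkey' : u * N = u0 * (1 - s ^ 2) := by
    have h2 : Complex.normSq t = s ^ 2 := by
      rw [hsdef, Complex.sq_norm]
    rw [hudef, hu0def]
    rw [h2] at hkey
    linarith [hkey]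
  have hNnorm : N = ‖(1:ℂ) - t‖ ^ 2 := by
    rw [hNdef, Complex.sq_norm]
  have habs1t_ub : ‖(1:ℂ) - t‖ ≤ 1 + s := by
    calc ‖(1:ℂ) - t‖ ≤ ‖(1:ℂ)‖ + ‖t‖ := norm_sub_le 1 t
      _ = 1 + s := by rw [norm_one, hsdef]
  have habs1t_lb : 1 - s ≤ ‖(1:ℂ) - t‖ := by
    have h2 := norm_sub_norm_le (1:ℂ) t
    rw [norm_one] at h2
    linarith
  have hN_ub : N ≤ (1 + s) ^ 2 := by
    rw [hNnorm]
    exact pow_le_pow_left₀ (norm_nonneg _) habs1t_ub 2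
  have hN_lb : (1 - s) ^ 2 ≤ N := by
    rw [hNnorm]
    exact pow_le_pow_left₀ (by linarith) habs1t_lb 2
  have hlog1 : Real.log (1 / ‖f z‖) = u := by
    rw [one_div, Real.log_inv, hudef, hre z hz]
  have hlog0 : Real.log (1 / ‖f 0‖) = u0 := by
    rw [one_div, Real.log_inv, hu0def, hcdef, hre 0 h0]
  rw [hlog1, hlog0]
  set r : ℝ := ‖z‖ with hrdef
  have hr0 : 0 ≤ r := norm_nonneg z
  have h1s : (0:ℝ) < 1 + s := by linarith
  have h1s' : (0:ℝ) < 1 - s := by linarith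
  have step2 : u0 * (1 - s) ≤ u * (1 + s) := by
    have step1 : (u0 * (1 - s)) * (1 + s) ≤ (u * (1 + s)) * (1 + s) := by nlinarith [hkey', hN_ub]
    exact le_of_mul_le_mul_right step1 h1s
  have step4 : u * (1 - s) ≤ u0 * (1 + s) := by
    have step3 : (u * (1 - s)) * (1 - s) ≤ (u0 * (1 + s)) * (1 - s) := by nlinarith [hkey', hN_lb]
    exact le_of_mul_le_mul_right step3 h1s'
  have e1 : (1 - r) * u0 ≤ (1 - s) * u0 :=
    mul_le_mul_of_nonneg_right (by linarith) hu0.le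
  have e2 : u * (1 + s) ≤ u * (1 + r) :=
    mul_le_mul_of_nonneg_left (by linarith) hu.le
  have e3 : u * (1 - r) ≤ u * (1 - s) :=
    mul_le_mul_of_nonneg_left (by linarith) hu.le
  have e4 : u0 * (1 + s) ≤ u0 * (1 + r) :=
    mul_le_mul_of_nonneg_left (by linarith) hu0.le
  constructor
  · rw [div_le_div_iff₀ (by linarith) hu0]
    linarith [e1, e2, step2]
  · rw [div_le_div_iff₀ hu0 (by linarith)]
    linarith [e3, e4, step4]
end
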